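/- Suppose each φ_n is Fréchet differentiable at B_n for a given B ∈ E, and let B′ ∈ E. Then the Newton linear system (id_E − Dγ(B))(B′ − B) = γ(B) − B holds if and only if B′_0 = z_0 and B′_{n+1} = φ_n(B_n) + Dφ_n(B_n)(B′_n − B_n) for every 0 ≤ n ≤ N−1. That is, one exact Newton iteration on the matching function is equivalent to the componentwise direct multiple shooting recursion. -/

import Mathlib

/-- The advancement map `γ : F^{N+1} → F^{N+1}` of multiple shooting:
`(γ B) 0 = z0` and `(γ B) (n+1) = φ n (B n)`. -/
def advancementMap {F : Type*} {N : ℕ} (z0 : F) (φ : Fin N → F → F)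
    (B : Fin (N + 1) → F) : Fin (N + 1) → F :=
  Fin.cons z0 fun n : Fin N => φ n (B n.castSucc)

theorem advancementMap_hasFDerivAt
    {F : Type*} [NormedAddCommGroup F] [NormedSpace ℝ F]
    {N : ℕ} (z0 : F) (φ : Fin N → F → F) (B : Fin (N + 1) → F)
    (hφ : ∀ n : Fin N, DifferentiableAt ℝ (φ n) (B n.castSucc)) :
    HasFDerivAt (advancementMap z0 φ)
      (ContinuousLinearMap.pi (Fin.cons 0 fun n : Fin N =>
        (fderiv ℝ (φ n) (B n.castSucc)).comp
          (ContinuousLinearMap.proj n.castSucc))) B := by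
  apply hasFDerivAt_pi''
  intro i
  refine Fin.cases ?_ ?_ i
  · have : (fun x : Fin (N+1) → F => advancementMap z0 φ x 0) = fun _ => z0 := by
      funext x; rfl
    rw [this]
    exact (hasFDerivAt_const z0 B).congr_fderiv (by ext v; simp)
  · intro n
    have : (fun x : Fin (N+1) → F => advancementMap z0 φ x n.succ)
        = fun x => φ n (x n.castSucc) := by
      funext x; simp [advancementMap]
    rw [this]
    have h1 := hasFDerivAt_apply (𝕜 := ℝ) (F' := fun _ : Fin (N+1) => F)
      n.castSucc B
    have := ((hφ n).hasFDerivAt).comp B h1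
    exact this.congr_fderiv (by ext v; simp)

/-- **Newton iteration ⟺ direct multiple shooting recursion.**
If each `φ n` is differentiable at `B n`, then the exact Newton linear system
`(id - Dγ B) (B' - B) = γ B - B` holds if and only if `B' 0 = z0` and
`B' (n+1) = φ n (B n) + Dφ n (B n) (B' n - B n)` for every `0 ≤ n ≤ N-1`. -/
theorem newton_system_iff_direct_recursion
    {F : Type*} [NormedAddCommGroup F] [NormedSpace ℝ F]
    (N : ℕ) (hN : 0 < N) (z0 : F) (φ : Fin N → F → F)
    (B B' : Fin (N + 1) → F)
    (hφ : ∀ n : Fin N, DifferentiableAt ℝ (φ n) (B n.castSucc)) :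
    (1 - fderiv ℝ (advancementMap z0 φ) B) (B' - B)
        = advancementMap z0 φ B - B ↔
      (B' 0 = z0 ∧ ∀ n : Fin N,
        B' n.succ = φ n (B n.castSucc)
          + fderiv ℝ (φ n) (B n.castSucc) (B' n.castSucc - B n.castSucc)) := by
  have hD := (advancementMap_hasFDerivAt z0 φ B hφ).fderiv
  rw [hD]
  constructor
  · intro h
    have h0 := congrFun h 0
    have hs : ∀ n : Fin N, _ := fun n => congrFun h n.succ
    constructor
    · simpa [advancementMap, ContinuousLinearMap.pi, sub_eq_sub_iff_sub_eq_sub]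
        using h0
    · intro n
      have := hs n
      simp only [ContinuousLinearMap.sub_apply, ContinuousLinearMap.one_apply,
        Pi.sub_apply, ContinuousLinearMap.pi_apply, Fin.cons_succ,
        ContinuousLinearMap.comp_apply, ContinuousLinearMap.proj_apply,
        advancementMap] at this
      have h2 : B' n.succ - B n.succ
          - fderiv ℝ (φ n) (B n.castSucc) (B' n.castSucc - B n.castSucc)
          = φ n (B n.castSucc) - B n.succ := this
      have := sub_eq_iff_eq_add.mp h2
      rw [sub_eq_iff_eq_add] at this
      rw [this]; abel
  · rintro ⟨h0, hs⟩
    funext i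
    refine Fin.cases ?_ ?_ i
    · simp [advancementMap, ContinuousLinearMap.pi, h0]
    · intro n
      have := hs n
      simp only [ContinuousLinearMap.sub_apply, ContinuousLinearMap.one_apply,
        Pi.sub_apply, ContinuousLinearMap.pi_apply, Fin.cons_succ,
        ContinuousLinearMap.comp_apply, ContinuousLinearMap.proj_apply,
        advancementMap, this]
      abel
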